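/- Let n be a positive integer, 1 ≤ p, q < ∞, β ∈ ℝ, 0 < c < 1/3, and let Ω ⊊ ℝⁿ be a nonempty open set with nonempty complement. Assume that the (q,p,β)-Hardy–Sobolev inequality holds in Ω with some constant C > 0. Then there exists a constant C' > 0 such that for every x ∈ Ω, setting r = c·d(x,Ωᶜ), one has cap_{p,β}(B(x,r),Ω) ≥ C' · r^{n+β−p}. -/

import Mathlib

open MeasureTheory Metric Set
open scoped ENNReal NNReal

noncomputable section

/-- The distance from `x` to the complement of `Ω`. -/
def distC {n : ℕ} (Ω : Set (EuclideanSpace ℝ (Fin n))) (x : EuclideanSpace ℝ (Fin n)) : ℝ :=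
  Metric.infDist x Ωᶜ

/-- The distance between two sets. -/
def sDist {n : ℕ} (E F : Set (EuclideanSpace ℝ (Fin n))) : ℝ :=
  sInf (Set.image2 dist E F)

/-- A function is admissible for `Ω` if it is Lipschitz and has compact support contained
in `Ω`. -/
def Admissible {n : ℕ} (Ω : Set (EuclideanSpace ℝ (Fin n)))
    (u : EuclideanSpace ℝ (Fin n) → ℝ) : Prop :=
  (∃ K : NNReal, LipschitzWith K u) ∧ HasCompactSupport u ∧ tsupport u ⊆ Ω

/-- `E` is compactly contained in `Ω`: `E` is bounded and has positive distance to `Ωᶜ`. -/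
def CptIn {n : ℕ} (E Ω : Set (EuclideanSpace ℝ (Fin n))) : Prop :=
  Bornology.IsBounded E ∧ 0 < sDist E Ωᶜ

/-- The weighted `p`-energy of `u` on `Ω` with the distance weight `d(x,Ωᶜ)^β`. -/
def energy {n : ℕ} (p β : ℝ) (Ω : Set (EuclideanSpace ℝ (Fin n)))
    (u : EuclideanSpace ℝ (Fin n) → ℝ) : ℝ≥0∞ :=
  ∫⁻ x in Ω, ENNReal.ofReal (‖fderiv ℝ u x‖ ^ p * distC Ω x ^ β)

/-- The weighted relative `(p,β)`-capacity of `E` in `Ω`. -/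
def wcap {n : ℕ} (p β : ℝ) (E Ω : Set (EuclideanSpace ℝ (Fin n))) : ℝ≥0∞ :=
  ⨅ (u : EuclideanSpace ℝ (Fin n) → ℝ)
    (_ : Admissible Ω u ∧ ∀ x ∈ E, 1 ≤ u x), energy p β Ω u

/-- The `(q,p,β)`-Hardy–Sobolev inequality holds in `Ω` with constant `C`. -/
def HardySobolev {n : ℕ} (q p β : ℝ) (Ω : Set (EuclideanSpace ℝ (Fin n))) (C : ℝ) : Prop :=
  ∀ u : EuclideanSpace ℝ (Fin n) → ℝ, Admissible Ω u →
    (∫⁻ x in Ω, ENNReal.ofReal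
        (|u x| ^ q * distC Ω x ^ (q / p * ((n : ℝ) - p + β) - n))) ^ (1 / q) ≤
      ENNReal.ofReal C * (energy p β Ω u) ^ (1 / p)

/-- The Hardy–Sobolev inequality implies a capacity lower bound for Whitney balls. -/
theorem stmt3 {n : ℕ} (hn : 0 < n) (p q β c : ℝ) (hp : 1 ≤ p) (hq : 1 ≤ q)
    (hc : 0 < c) (hc' : c < 1 / 3)
    (Ω : Set (EuclideanSpace ℝ (Fin n))) (hΩopen : IsOpen Ω) (hΩne : Ω.Nonempty)
    (hΩcne : Ωᶜ.Nonempty) (C : ℝ) (hC : 0 < C) (hHS : HardySobolev q p β Ω C) :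
    ∃ C' > 0, ∀ x ∈ Ω,
      ENNReal.ofReal (C' * (c * distC Ω x) ^ ((n : ℝ) + β - p)) ≤
        wcap p β (Metric.ball x (c * distC Ω x)) Ω := by
  classical
  have hp0 : (0:ℝ) < p := lt_of_lt_of_le one_pos hp
  have hq0 : (0:ℝ) < q := lt_of_lt_of_le one_pos hq
  haveI : Inhabited (Fin n) := ⟨⟨0, hn⟩⟩
  haveI : Nontrivial (EuclideanSpace ℝ (Fin n)) :=
    (WithLp.equiv 2 (∀ _ : Fin n, ℝ)).nontrivial
  set γ : ℝ := q / p * ((n : ℝ) - p + β) - n with hγ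
  have hc1 : (0:ℝ) < 1 - c := by linarith
  set m : ℝ := min ((1 - c) ^ γ) ((1 + c) ^ γ) with hm
  have hm0 : 0 < m :=
    lt_min (Real.rpow_pos_of_pos hc1 γ) (Real.rpow_pos_of_pos (by linarith) γ)
  set V : ℝ := (volume (Metric.ball (0 : EuclideanSpace ℝ (Fin n)) 1)).toReal with hV
  have hVfin : volume (Metric.ball (0 : EuclideanSpace ℝ (Fin n)) 1) ≠ ⊤ :=
    measure_ball_lt_top.ne
  have hV0 : 0 < V :=
    ENNReal.toReal_pos (measure_ball_pos _ _ one_pos).ne' hVfin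
  set A : ℝ := (V * m * c ^ (-γ)) ^ (1 / q) with hA
  have hVmc : (0:ℝ) < V * m * c ^ (-γ) := by positivity
  have hA0 : 0 < A := Real.rpow_pos_of_pos hVmc _
  refine ⟨(A / C) ^ p, Real.rpow_pos_of_pos (div_pos hA0 hC) p, ?_⟩
  intro x hx
  set d : ℝ := distC Ω x with hd
  have hd0 : 0 < d := by
    rw [hd, distC]
    exact (hΩopen.isClosed_compl.notMem_iff_infDist_pos hΩcne).1 (by simpa using hx)
  set r : ℝ := c * d with hr
  have hr0 : 0 < r := mul_pos hc hd0
  have hrd : r < d := by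
    have : c * d < 1 * d := by
      apply mul_lt_mul_of_pos_right _ hd0
      linarith
    simpa using this
  -- distance bounds on the ball
  have hlow : ∀ y ∈ Metric.ball x r, (1 - c) * d ≤ distC Ω y := by
    intro y hy
    have h1 : Metric.infDist x Ωᶜ ≤ Metric.infDist y Ωᶜ + dist x y :=
      Metric.infDist_le_infDist_add_dist
    have h2 : dist x y < r := by rw [dist_comm]; exact Metric.mem_ball.1 hy
    have h3 : d = Metric.infDist x Ωᶜ := hd.trans rfl
    have h4 : r = c * d := hr
    show (1 - c) * d ≤ Metric.infDist y Ωᶜ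
    linarith
  have hup : ∀ y ∈ Metric.ball x r, distC Ω y ≤ (1 + c) * d := by
    intro y hy
    have h1 : Metric.infDist y Ωᶜ ≤ Metric.infDist x Ωᶜ + dist y x :=
      Metric.infDist_le_infDist_add_dist
    have h2 : dist y x < r := Metric.mem_ball.1 hy
    have h3 : d = Metric.infDist x Ωᶜ := hd.trans rfl
    have h4 : r = c * d := hr
    show Metric.infDist y Ωᶜ ≤ (1 + c) * d
    linarith
  have hball : Metric.ball x r ⊆ Ω := by
    intro y hy
    by_contra hyc
    have : distC Ω y = 0 := by
      rw [distC]; exact Metric.infDist_zero_of_mem (by simpa using hyc)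
    have := hlow y hy
    nlinarith
  -- the pointwise lower bound on the weight
  have hweight : ∀ y ∈ Metric.ball x r, m * d ^ γ ≤ distC Ω y ^ γ := by
    intro y hy
    have hylow := hlow y hy
    have hyup := hup y hy
    have hypos : 0 < distC Ω y := lt_of_lt_of_le (by positivity) hylow
    rcases le_or_gt 0 γ with hγ0 | hγ0
    · have h1 : ((1 - c) * d) ^ γ ≤ distC Ω y ^ γ :=
        Real.rpow_le_rpow (by positivity) hylow hγ0
      have h2 : ((1 - c) * d) ^ γ = (1 - c) ^ γ * d ^ γ :=
        Real.mul_rpow hc1.le hd0.le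
      have h3 : m * d ^ γ ≤ (1 - c) ^ γ * d ^ γ := by
        apply mul_le_mul_of_nonneg_right (min_le_left _ _) (by positivity)
      linarith
    · have h1 : ((1 + c) * d) ^ γ ≤ distC Ω y ^ γ :=
        Real.rpow_le_rpow_of_nonpos hypos hyup hγ0.le
      have h2 : ((1 + c) * d) ^ γ = (1 + c) ^ γ * d ^ γ :=
        Real.mul_rpow (by linarith) hd0.le
      have h3 : m * d ^ γ ≤ (1 + c) ^ γ * d ^ γ := by
        apply mul_le_mul_of_nonneg_right (min_le_right _ _) (by positivity)
      linarith
  -- start the capacity bound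
  rw [wcap]
  refine le_iInf fun u => le_iInf fun hu => ?_
  obtain ⟨hadm, hge⟩ := hu
  have hHSu := hHS u hadm
  rw [← hγ] at hHSu
  -- lower bound of the Hardy--Sobolev left-hand side
  have hIlow : ENNReal.ofReal (r ^ n * V * (m * d ^ γ)) ≤
      ∫⁻ y in Ω, ENNReal.ofReal (|u y| ^ q * distC Ω y ^ γ) := by
    have step1 : ∫⁻ y in Metric.ball x r, ENNReal.ofReal (|u y| ^ q * distC Ω y ^ γ) ≤
        ∫⁻ y in Ω, ENNReal.ofReal (|u y| ^ q * distC Ω y ^ γ) :=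
      lintegral_mono_set hball
    have step2 : ∫⁻ _ in Metric.ball x r, ENNReal.ofReal (m * d ^ γ) ≤
        ∫⁻ y in Metric.ball x r, ENNReal.ofReal (|u y| ^ q * distC Ω y ^ γ) := by
      apply setLIntegral_mono' measurableSet_ball
      intro y hy
      apply ENNReal.ofReal_le_ofReal
      have h1 : (1:ℝ) ≤ |u y| ^ q := by
        have := hge y hy
        have habs : (1:ℝ) ≤ |u y| := le_trans this (le_abs_self _)
        calc (1:ℝ) = 1 ^ q := (Real.one_rpow q).symm
        _ ≤ |u y| ^ q := Real.rpow_le_rpow zero_le_one habs hq0.le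
      have h2 := hweight y hy
      calc m * d ^ γ = 1 * (m * d ^ γ) := (one_mul _).symm
      _ ≤ |u y| ^ q * (distC Ω y ^ γ) := by
          apply mul_le_mul h1 h2 (by positivity) (by positivity)
    have step3 : (∫⁻ _ in Metric.ball x r, ENNReal.ofReal (m * d ^ γ)) =
        ENNReal.ofReal (r ^ n * V * (m * d ^ γ)) := by
      rw [setLIntegral_const]
      rw [Measure.addHaar_ball _ x hr0.le, finrank_euclideanSpace_fin]
      rw [← ENNReal.ofReal_toReal hVfin, ← hV]
      rw [← ENNReal.ofReal_mul (by positivity), ← ENNReal.ofReal_mul (by positivity)]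
      ring_nf
    calc ENNReal.ofReal (r ^ n * V * (m * d ^ γ)) =
        ∫⁻ _ in Metric.ball x r, ENNReal.ofReal (m * d ^ γ) := step3.symm
    _ ≤ _ := le_trans step2 step1
  -- convert the lower bound into the rpow form
  have hWA : (r ^ n * V * (m * d ^ γ)) ^ (1 / q) = A * r ^ (((n:ℝ) + β - p) / p) := by
    have hdrc : d = r / c := by rw [hr]; field_simp
    have h1 : d ^ γ = r ^ γ * c ^ (-γ) := by
      rw [hdrc, Real.div_rpow hr0.le hc.le, Real.rpow_neg hc.le, div_eq_mul_inv]
    have h2 : r ^ n * V * (m * d ^ γ) = (V * m * c ^ (-γ)) * r ^ ((n:ℝ) + γ) := by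
      rw [h1, Real.rpow_add hr0, Real.rpow_natCast]
      ring
    rw [h2, Real.mul_rpow hVmc.le (Real.rpow_nonneg hr0.le _), ← hA,
      ← Real.rpow_mul hr0.le]
    have he : ((n:ℝ) + γ) * (1 / q) = ((n:ℝ) + β - p) / p := by
      rw [hγ]; field_simp; ring
    rw [he]
  have hkey : ENNReal.ofReal (A * r ^ (((n:ℝ) + β - p) / p)) ≤
      ENNReal.ofReal C * (energy p β Ω u) ^ (1 / p) := by
    refine le_trans ?_ hHSu
    rw [← hWA, ← ENNReal.ofReal_rpow_of_pos (by positivity)]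
    exact ENNReal.rpow_le_rpow hIlow (by positivity)
  -- divide by C and raise to the power p
  set E : ℝ≥0∞ := energy p β Ω u with hE
  have hdiv : ENNReal.ofReal (A * r ^ (((n:ℝ) + β - p) / p) / C) ≤ E ^ (1 / p) := by
    rw [ENNReal.ofReal_div_of_pos hC]
    rw [ENNReal.div_le_iff_le_mul (Or.inl (by simp [hC])) (Or.inl ENNReal.ofReal_ne_top)]
    calc ENNReal.ofReal (A * r ^ (((n:ℝ) + β - p) / p)) ≤
        ENNReal.ofReal C * E ^ (1 / p) := hkey
    _ = E ^ (1 / p) * ENNReal.ofReal C := mul_comm _ _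
  have hfinal : ENNReal.ofReal ((A / C) ^ p * r ^ ((n:ℝ) + β - p)) ≤ E := by
    have h1 : (ENNReal.ofReal (A * r ^ (((n:ℝ) + β - p) / p) / C)) ^ p ≤ (E ^ (1 / p)) ^ p :=
      ENNReal.rpow_le_rpow hdiv hp0.le
    have h2 : (E ^ (1 / p)) ^ p = E := by
      rw [← ENNReal.rpow_mul, one_div, inv_mul_cancel₀ hp0.ne', ENNReal.rpow_one]
    rw [h2] at h1
    refine le_trans (le_of_eq ?_) h1
    rw [ENNReal.ofReal_rpow_of_pos (show (0:ℝ) < A * r ^ (((n:ℝ) + β - p) / p) / C by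
      positivity)]
    congr 1
    have h3 : A * r ^ (((n:ℝ) + β - p) / p) / C = (A / C) * r ^ (((n:ℝ) + β - p) / p) := by
      ring
    rw [h3, Real.mul_rpow (by positivity) (Real.rpow_nonneg hr0.le _),
      ← Real.rpow_mul hr0.le]
    have he : ((n:ℝ) + β - p) / p * p = (n:ℝ) + β - p := by field_simp
    rw [he]
  exact hfinal
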